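/- Suppose the pair (μ, w) satisfies the continuity equation: for every x ∈ A₀ the function t ↦ μ(t)(x) is absolutely continuous on [a, b] and (d/dt) μ(t)(x) = w(t)(∇x) for almost every t ∈ [a, b]. Then the total mass is preserved along the path: ‖μ(t)‖_{A*} = ‖μ(a)‖_{A*} for all t ∈ [a, b]. -/

import Mathlib

open MeasureTheory intervalIntegral
open MeasureTheory intervalIntegral Complex

section aux
variable {A : Type*} [NonUnitalCStarAlgebra A]

/-- Expansion of `φ (star (x + l • y) * (x + l • y))`. -/
lemma stmt19_expand (φ : A →L[ℂ] ℂ) (x y : A) (l : ℂ) :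
    φ (star (x + l • y) * (x + l • y)) =
      φ (star x * x) + l * φ (star x * y) + (starRingEnd ℂ l) * φ (star y * x)
        + (l * starRingEnd ℂ l) * φ (star y * y) := by
  have h : star (x + l • y) * (x + l • y)
      = star x * x + l • (star x * y) + (starRingEnd ℂ l) • (star y * x)
        + (l * starRingEnd ℂ l) • (star y * y) := by
    rw [star_add, star_smul]
    simp only [add_mul, mul_add, smul_mul_assoc, mul_smul_comm, smul_smul, Complex.star_def]
    module
  rw [h]
  simp only [map_add, ContinuousLinearMap.map_smul, smul_eq_mul]

lemma stmt19_herm (φ : A →L[ℂ] ℂ)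
    (hφ : ∀ x : A, ∃ r : ℝ, 0 ≤ r ∧ φ (star x * x) = (r : ℂ)) (x y : A) :
    φ (star y * x) = starRingEnd ℂ (φ (star x * y)) := by
  set u := φ (star x * y) with hu
  set v := φ (star y * x) with hv
  obtain ⟨p, hp0, hp⟩ := hφ x
  obtain ⟨q, hq0, hq⟩ := hφ y
  obtain ⟨r1, _, hr1⟩ := hφ (x + (1 : ℂ) • y)
  obtain ⟨r2, _, hr2⟩ := hφ (x + (I : ℂ) • y)
  rw [stmt19_expand φ x y 1] at hr1
  rw [stmt19_expand φ x y I] at hr2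
  rw [hp, hq] at hr1 hr2
  have h1 : u.im + v.im = 0 := by
    have := congrArg Complex.im hr1
    simp [Complex.add_im, Complex.mul_im, Complex.ofReal_im] at this
    linarith
  have h2 : u.re - v.re = 0 := by
    have := congrArg Complex.im hr2
    simp [Complex.add_im, Complex.mul_im, Complex.mul_re, Complex.ofReal_im,
      Complex.ofReal_re, Complex.I_re, Complex.I_im] at this
    linarith
  apply Complex.ext
  · simp only [Complex.conj_re]; linarith
  · simp only [Complex.conj_im]; linarith

/-- Cauchy–Schwarz for positive functionals. -/
lemma stmt19_cs (φ : A →L[ℂ] ℂ)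
    (hφ : ∀ x : A, ∃ r : ℝ, 0 ≤ r ∧ φ (star x * x) = (r : ℂ)) (x y : A) :
    ‖φ (star x * y)‖ ^ 2 ≤ (φ (star x * x)).re * (φ (star y * y)).re := by
  obtain ⟨p, hp0, hp⟩ := hφ x
  obtain ⟨q, hq0, hq⟩ := hφ y
  set u := φ (star x * y) with hu
  by_cases hu0 : u = 0
  · rw [hu0]
    simp [hp, hq]
    positivity
  · have hnz : (‖u‖ : ℂ) ≠ 0 := by simpa using norm_ne_zero_iff.mpr hu0
    set c : ℂ := starRingEnd ℂ u / (‖u‖ : ℂ) with hc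
    have habs : (starRingEnd ℂ u) * u = ((‖u‖ : ℂ)) * (‖u‖ : ℂ) := by
      rw [mul_comm, Complex.mul_conj, Complex.normSq_eq_norm_sq]
      push_cast; ring
    have hcu : c * u = (‖u‖ : ℂ) := by
      rw [hc, div_mul_eq_mul_div, habs, mul_div_assoc, div_self hnz, mul_one]
    have hcc : c * starRingEnd ℂ c = 1 := by
      rw [hc, map_div₀, Complex.conj_conj, Complex.conj_ofReal, div_mul_div_comm, habs]
      exact div_self (mul_ne_zero hnz hnz)
    have hv : φ (star y * x) = starRingEnd ℂ u := stmt19_herm φ hφ x y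
    have key : ∀ t : ℝ, 0 ≤ q * t * t + (2 * ‖u‖) * t + p := by
      intro t
      obtain ⟨r, hr0, hr⟩ := hφ (x + ((t : ℂ) * c) • y)
      rw [stmt19_expand φ x y ((t : ℂ) * c)] at hr
      rw [hp, hq, hv] at hr
      have e1 : ((t : ℂ) * c) * u = (t : ℂ) * (‖u‖ : ℂ) := by rw [mul_assoc, hcu]
      have e2 : (starRingEnd ℂ ((t : ℂ) * c)) * (starRingEnd ℂ u) = (t : ℂ) * (‖u‖ : ℂ) := by
        have h3 : ((t : ℂ) * c) * u = (((t * ‖u‖ : ℝ) : ℂ)) := by push_cast; rw [mul_assoc, hcu]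
        rw [← map_mul, h3, Complex.conj_ofReal]; push_cast; ring
      have e3 : ((t : ℂ) * c) * starRingEnd ℂ ((t : ℂ) * c) = (t : ℂ) * (t : ℂ) := by
        rw [map_mul, Complex.conj_ofReal]
        calc (t : ℂ) * c * ((t : ℂ) * starRingEnd ℂ c)
            = ((t : ℂ) * (t : ℂ)) * (c * starRingEnd ℂ c) := by ring
          _ = (t : ℂ) * (t : ℂ) := by rw [hcc, mul_one]
      rw [e1, e2, e3] at hr
      have := congrArg Complex.re hr
      simp only [Complex.ofReal_re, Complex.add_re, Complex.mul_re, Complex.ofReal_im,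
        Complex.mul_im, mul_zero, zero_mul, sub_zero, add_zero, zero_add] at this
      nlinarith [hr0]
    have hd : discrim q (2 * ‖u‖) p ≤ 0 := by
      apply discrim_le_zero
      intro t
      have := key t
      nlinarith
    rw [discrim] at hd
    have : ‖u‖ ^ 2 ≤ q * p := by nlinarith
    rw [hp, hq]
    simp only [Complex.ofReal_re]
    linarith

/-- If two positive functionals agree on the local units, `‖φ‖ ≤ ‖ψ‖`. -/
lemma stmt19_norm_le (S : ℕ → NonUnitalStarSubalgebra ℂ A)
    (hdense : Dense (⋃ j, (S j : Set A)))
    (e : ℕ → A) (he : ∀ j, e j ∈ S j)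
    (hunit : ∀ j, ∀ a' ∈ S j, e j * a' = a' ∧ a' * e j = a')
    (φ ψ : A →L[ℂ] ℂ)
    (hφ : ∀ x : A, ∃ r : ℝ, 0 ≤ r ∧ φ (star x * x) = (r : ℂ))
    (hψ : ∀ x : A, ∃ r : ℝ, 0 ≤ r ∧ ψ (star x * x) = (r : ℂ))
    (hj : ∀ j, φ (e j) = ψ (e j)) : ‖φ‖ ≤ ‖ψ‖ := by
  have hse : ∀ j, star (e j) = e j := by
    intro j
    have hleft : ∀ a' ∈ S j, star (e j) * a' = a' := by
      intro a' ha'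
      have h := (hunit j (star a') (star_mem ha')).2
      calc star (e j) * a' = star (star a' * e j) := by rw [star_mul, star_star]
        _ = star (star a') := by rw [h]
        _ = a' := star_star a'
    have h1 : star (e j) * e j = star (e j) := (hunit j (star (e j)) (star_mem (he j))).2
    have h2 : star (e j) * e j = e j := hleft (e j) (he j)
    rw [h1] at h2; exact h2
  have hne : ∀ j, ‖e j‖ ≤ 1 := by
    intro j
    have h1 : ‖e j‖ * ‖e j‖ = ‖e j‖ := by
      have h := CStarRing.norm_star_mul_self (x := e j)
      rw [hse j, (hunit j (e j) (he j)).1] at h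
      linarith [h]
    nlinarith [norm_nonneg (e j)]
  set C : ℝ := Real.sqrt (‖ψ‖ * ‖φ‖) with hC
  have hCnn : 0 ≤ C := Real.sqrt_nonneg _
  have hbound : ∀ x ∈ ⋃ j, (S j : Set A), ‖φ x‖ ≤ C * ‖x‖ := by
    intro x hx
    obtain ⟨s, ⟨j, rfl⟩, hxj⟩ := hx
    have hex : star (e j) * x = x := by rw [hse j]; exact (hunit j x hxj).1
    have hee : star (e j) * e j = e j := by rw [hse j]; exact (hunit j (e j) (he j)).1
    have hcs := stmt19_cs φ hφ (e j) x
    rw [hex, hee] at hcs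
    have hp : (φ (e j)).re ≤ ‖ψ‖ := by
      rw [hj j]
      calc (ψ (e j)).re ≤ ‖ψ (e j)‖ := by
            exact Complex.re_le_norm _
        _ ≤ ‖ψ‖ * ‖e j‖ := ψ.le_opNorm _
        _ ≤ ‖ψ‖ * 1 := mul_le_mul_of_nonneg_left (hne j) (norm_nonneg ψ)
        _ = ‖ψ‖ := mul_one _
    have hp0 : 0 ≤ (φ (e j)).re := by
      obtain ⟨r, hr0, hr⟩ := hφ (e j)
      rw [hee] at hr
      rw [hr]; simpa using hr0
    have hq : (φ (star x * x)).re ≤ ‖φ‖ * ‖x‖ ^ 2 := by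
      calc (φ (star x * x)).re ≤ ‖φ (star x * x)‖ := by
            exact Complex.re_le_norm _
        _ ≤ ‖φ‖ * ‖star x * x‖ := φ.le_opNorm _
        _ ≤ ‖φ‖ * (‖star x‖ * ‖x‖) := mul_le_mul_of_nonneg_left (norm_mul_le _ _) (norm_nonneg φ)
        _ = ‖φ‖ * ‖x‖ ^ 2 := by rw [norm_star]; ring
    have hq0 : 0 ≤ (φ (star x * x)).re := by
      obtain ⟨r, hr0, hr⟩ := hφ x
      rw [hr]; simpa using hr0
    have hsq : ‖φ x‖ ^ 2 ≤ (‖ψ‖ * ‖φ‖) * ‖x‖ ^ 2 := by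
      calc ‖φ x‖ ^ 2 ≤ (φ (e j)).re * (φ (star x * x)).re := hcs
        _ ≤ ‖ψ‖ * (‖φ‖ * ‖x‖ ^ 2) := mul_le_mul hp hq hq0 (le_trans hp0 hp)
        _ = (‖ψ‖ * ‖φ‖) * ‖x‖ ^ 2 := by ring
    have h5 : ‖φ x‖ ≤ Real.sqrt ((‖ψ‖ * ‖φ‖) * ‖x‖ ^ 2) := by
      rw [← Real.sqrt_sq (norm_nonneg (φ x))]
      exact Real.sqrt_le_sqrt hsq
    calc ‖φ x‖ ≤ Real.sqrt ((‖ψ‖ * ‖φ‖) * ‖x‖ ^ 2) := h5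
      _ = C * ‖x‖ := by
          rw [Real.sqrt_mul (by positivity), Real.sqrt_sq (norm_nonneg x)]
  have hball : ∀ x : A, ‖φ x‖ ≤ C * ‖x‖ := by
    have hclosed : IsClosed {x : A | ‖φ x‖ ≤ C * ‖x‖} :=
      isClosed_le φ.continuous.norm (continuous_const.mul continuous_norm)
    intro x
    exact closure_minimal hbound hclosed (hdense x)
  have hnorm : ‖φ‖ ≤ C := φ.opNorm_le_bound hCnn hball
  by_cases h0 : ‖φ‖ = 0
  · rw [h0]; exact norm_nonneg ψ
  · have hpos : 0 < ‖φ‖ := lt_of_le_of_ne (norm_nonneg φ) (Ne.symm h0)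
    have h2 : ‖φ‖ ^ 2 ≤ ‖ψ‖ * ‖φ‖ := by
      have := Real.sq_sqrt (mul_nonneg (norm_nonneg ψ) (norm_nonneg φ))
      nlinarith [hnorm]
    nlinarith

end aux

/-- Let `A` be an AF-C*-algebra with generating finite-dimensional
*-subalgebras `S j` (units `e j`, dense union), `B` a normed `ℂ`-vector space, and
`∇ : A₀ → B` linear with `∇ (e j) = 0` for all `j`.  Suppose `μ : [a,b] → A*` is a path of
positive continuous linear functionals and `w : [a,b] → B*` a path of continuous linear
functionals such that `(μ, w)` satisfies the continuity equation: for every `x ∈ A₀` the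
function `t ↦ μ(t)(x)` is absolutely continuous with `(d/dt) μ(t)(x) = w(t)(∇ x)` a.e.
(encoded in integrated form `μ(t)(x) = μ(a)(x) + ∫_a^t w(s)(∇ x) ds`).  Then the total mass
is preserved: `‖μ(t)‖_{A*} = ‖μ(a)‖_{A*}` for all `t ∈ [a, b]`. -/
theorem stmt_19 {A : Type*} [NonUnitalCStarAlgebra A]
    {B : Type*} [NormedAddCommGroup B] [NormedSpace ℂ B]
    (S : ℕ → NonUnitalStarSubalgebra ℂ A) (hmono : Monotone S)
    [hfin : ∀ j, FiniteDimensional ℂ (S j)]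
    (hdense : Dense (⋃ j, (S j : Set A)))
    (e : ℕ → A) (he : ∀ j, e j ∈ S j)
    (hunit : ∀ j, ∀ a' ∈ S j, e j * a' = a' ∧ a' * e j = a')
    (grad : A →ₗ[ℂ] B) (hgrad0 : ∀ j, grad (e j) = 0)
    (a b : ℝ) (hab : a ≤ b)
    (μ : ℝ → (A →L[ℂ] ℂ)) (w : ℝ → (B →L[ℂ] ℂ))
    (hpos : ∀ t ∈ Set.Icc a b, ∀ x : A, ∃ r : ℝ, 0 ≤ r ∧ μ t (star x * x) = (r : ℂ))
    (heq : ∀ j, ∀ x ∈ S j,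
      IntervalIntegrable (fun s => w s (grad x)) volume a b ∧
        ∀ t ∈ Set.Icc a b, μ t x = μ a x + ∫ s in a..t, w s (grad x)) :
    ∀ t ∈ Set.Icc a b, ‖μ t‖ = ‖μ a‖ := by
  intro t ht
  have ha : a ∈ Set.Icc a b := ⟨le_refl a, hab⟩
  have hj : ∀ j, μ t (e j) = μ a (e j) := by
    intro j
    have h := (heq j (e j) (he j)).2 t ht
    rw [hgrad0 j] at h
    simpa using h
  have hφ := hpos t ht
  have hψ := hpos a ha
  exact le_antisymm
    (stmt19_norm_le S hdense e he hunit (μ t) (μ a) hφ hψ hj)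
    (stmt19_norm_le S hdense e he hunit (μ a) (μ t) hψ hφ (fun j => (hj j).symm))
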